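/- Let E be a bounded spectral family in a complete orthomodular lattice L and f_E(J) := inf{λ : E_λ ∈ J} for dual ideals J. Then f_E is upper semicontinuous on D(L): for every dual ideal J₀ and ε > 0 there exists P ∈ J₀ such that for all dual ideals J containing P, f_E(J) < f_E(J₀) + ε. -/
import Mathlib


def IsDualIdeal {L : Type} [Lattice L] [OrderBot L] (J : Set L) : Prop :=
  J.Nonempty ∧ ⊥ ∉ J ∧ (∀ a ∈ J, ∀ b ∈ J, a ⊓ b ∈ J) ∧ (∀ a ∈ J, ∀ b : L, a ≤ b → b ∈ J)

class Orthomodular (L : Type) [CompleteLattice L] where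
  compl : L → L
  compl_compl : ∀ x : L, compl (compl x) = x
  compl_antitone : ∀ x y : L, x ≤ y → compl y ≤ compl x
  inf_compl_eq_bot : ∀ x : L, x ⊓ compl x = ⊥
  sup_compl_eq_top : ∀ x : L, x ⊔ compl x = ⊤
  orthomodular : ∀ x y : L, x ≤ y → y = x ⊔ (y ⊓ compl x)

/-- A bounded spectral family in a complete lattice: monotone, right-continuous,
eventually `⊥` to the left and eventually `⊤` to the right. -/
structure SpectralFamily (L : Type) [CompleteLattice L] where
  E : ℝ → L
  mono : Monotone E
  rightCont : ∀ l : ℝ, E l = ⨅ (m : ℝ) (_ : l < m), E m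
  bddBelow : ∃ l : ℝ, E l = ⊥
  bddAbove : ∃ l : ℝ, E l = ⊤

/-- The observable function of a bounded spectral family on dual ideals. -/
noncomputable def obsFun {L : Type} [CompleteLattice L] (E : SpectralFamily L)
    (J : Set L) : ℝ :=
  sInf {l : ℝ | E.E l ∈ J}


/-- Upper semicontinuity of the observable function on the space of dual ideals. -/
theorem stmt4 {L : Type} [CompleteLattice L] [Orthomodular L] (E : SpectralFamily L)
    (J₀ : Set L) (hJ₀ : IsDualIdeal J₀) (ε : ℝ) (hε : 0 < ε) :
    ∃ P ∈ J₀, ∀ J : Set L, IsDualIdeal J → P ∈ J → obsFun E J < obsFun E J₀ + ε := by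
  obtain ⟨l₀, hl₀⟩ := E.bddBelow
  obtain ⟨lt, hlt⟩ := E.bddAbove
  -- lower bound for the defining set of any dual ideal
  have hbdd : ∀ J : Set L, IsDualIdeal J → BddBelow {l : ℝ | E.E l ∈ J} := by
    intro J hJ
    refine ⟨l₀, fun l hl => ?_⟩
    by_contra h
    push_neg at h
    have : E.E l ≤ ⊥ := hl₀ ▸ E.mono h.le
    exact hJ.2.1 (le_bot_iff.mp this ▸ hl)
  -- ⊤ ∈ J₀, so the set for J₀ is nonempty
  obtain ⟨a, ha⟩ := hJ₀.1
  have htop : (⊤ : L) ∈ J₀ := hJ₀.2.2.2 a ha ⊤ le_top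
  have hne : {l : ℝ | E.E l ∈ J₀}.Nonempty := ⟨lt, by simp [Set.mem_setOf_eq, hlt, htop]⟩
  have : sInf {l : ℝ | E.E l ∈ J₀} < obsFun E J₀ + ε := by
    simpa [obsFun] using lt_add_of_pos_right (obsFun E J₀) hε
  obtain ⟨l, hlmem, hlε⟩ := exists_lt_of_csInf_lt hne this
  refine ⟨E.E l, hlmem, fun J hJ hPJ => ?_⟩
  calc obsFun E J ≤ l := csInf_le (hbdd J hJ) hPJ
    _ < obsFun E J₀ + ε := hlε
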